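/- Let F_{p^t} be an n×n Frobenius block whose irreducible p satisfies condition (*), let C be a *cosquare root of F_{p^t}, and let φ be a nonzero function of form (♦). Then the matrix C·φ(F_{p^t}) is itself a *cosquare root of F_{p^t} (and hence, in particular, is a Toeplitz matrix). -/

import Mathlib

open Matrix Polynomial

/-- The companion matrix of a monic polynomial `q = xⁿ + c₁xⁿ⁻¹ + ⋯ + cₙ`, as an
`n × n` matrix: `1`'s on the first subdiagonal, last column `(-cₙ, …, -c₁)ᵀ`,
and all other entries `0`. -/
def companionMatrix {F : Type*} [Field F] (n : ℕ) (q : Polynomial F) :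
    Matrix (Fin n) (Fin n) F :=
  Matrix.of fun i j =>
    if (j : ℕ) = n - 1 then -q.coeff i
    else if (i : ℕ) = (j : ℕ) + 1 then 1 else 0

/-- For a monic `f = xᵏ + a₁xᵏ⁻¹ + ⋯ + a_k` with `a_k ≠ 0`, the polynomial
`f^∨(x) = ā_k⁻¹ (1 + ā₁x + ⋯ + ā_{k-1}xᵏ⁻¹ + ā_k xᵏ)`. -/
noncomputable def polyVee {F : Type*} [Field F] (σ : F →+* F) (f : Polynomial F) :
    Polynomial F :=
  Polynomial.C (σ (f.coeff 0))⁻¹ * (f.map σ).reverse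

/-- `φ(M) = b₀•1 + ∑_{j=1}^{r} (b_j • Mʲ + σ(b_j) • M⁻ʲ)`: the evaluation of a
function `φ(x) = b̄_r x⁻ʳ + ⋯ + b̄₁x⁻¹ + b₀ + b₁x + ⋯ + b_r xʳ` of form (♦)
at an invertible matrix `M`. -/
noncomputable def phiMat {F : Type*} [Field F] (σ : F →+* F) {n : ℕ} (r : ℕ) (b : ℕ → F)
    (M : Matrix (Fin n) (Fin n) F) : Matrix (Fin n) (Fin n) F :=
  b 0 • (1 : Matrix (Fin n) (Fin n) F)
    + ∑ j ∈ Finset.Icc 1 r, (b j • M ^ j + σ (b j) • M⁻¹ ^ j)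

/-- The coefficient conditions of form (♦) for `φ`, relative to the irreducible
polynomial `p` and the involution `σ`; here `r = ⌊(deg p)/2⌋`. -/
def formDiamond {F : Type*} [Field F] (σ : F →+* F) (p : Polynomial F) (r : ℕ)
    (b : ℕ → F) : Prop :=
  b 0 = σ (b 0) ∧
  (Even p.natDegree →
    (σ = RingHom.id F → b r = 0) ∧
    (σ ≠ RingHom.id F → p.eval 0 ≠ 1 → b r = σ (b r)) ∧
    (σ ≠ RingHom.id F → p.eval 0 = 1 → b r = - σ (b r)))

lemma sum_mulVec' {F : Type*} [Field F] {n : ℕ} {ι : Type*} (s : Finset ι)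
    (A : ι → Matrix (Fin n) (Fin n) F) (v : Fin n → F) :
    (∑ i ∈ s, A i) *ᵥ v = ∑ i ∈ s, (A i *ᵥ v) := by
  ext k
  simp only [Matrix.mulVec, dotProduct, Finset.sum_apply, Matrix.sum_apply,
    Finset.sum_mul]
  rw [Finset.sum_comm]

lemma companion_aeval {F : Type*} [Field F] {n : ℕ} (q : Polynomial F) (hq : q.Monic)
    (hdeg : q.natDegree = n) (hn : 0 < n) :
    Polynomial.aeval (companionMatrix n q) q = 0 := by
  set M := companionMatrix n q with hM
  have hcol : ∀ m : ℕ, (hm : m + 1 < n) →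
      M *ᵥ Pi.single (⟨m, by omega⟩ : Fin n) 1 = Pi.single (⟨m+1, hm⟩ : Fin n) 1 := by
    intro m hm
    rw [Matrix.mulVec_single_one]
    ext i
    simp only [hM, companionMatrix, Matrix.col_apply, Matrix.transpose_apply, Matrix.of_apply]
    rw [if_neg (show ¬ ((⟨m, by omega⟩ : Fin n) : ℕ) = n - 1 by simp only [Fin.val_mk]; omega)]
    rcases eq_or_ne (i : ℕ) (m+1) with h | h
    · rw [if_pos (by simpa using h)]
      rw [show i = (⟨m+1,hm⟩ : Fin n) from Fin.ext h]
      simp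
    · rw [if_neg (by simpa using h)]
      rw [Pi.single_eq_of_ne (fun hc => h (by rw [hc]))]
  have hlast : M *ᵥ Pi.single (⟨n-1, by omega⟩ : Fin n) 1 = fun i : Fin n => -q.coeff (i:ℕ) := by
    rw [Matrix.mulVec_single_one]
    ext i
    simp only [hM, companionMatrix, Matrix.col_apply, Matrix.transpose_apply, Matrix.of_apply]
    rw [if_pos (by simp)]
  have hpow : ∀ m : ℕ, (hm : m < n) →
      (M ^ m) *ᵥ Pi.single (⟨0, hn⟩ : Fin n) 1 = Pi.single (⟨m, hm⟩ : Fin n) 1 := by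
    intro m
    induction m with
    | zero => intro hm; rw [pow_zero, Matrix.one_mulVec]
    | succ k ih =>
      intro hm
      rw [pow_succ', ← Matrix.mulVec_mulVec, ih (by omega), hcol k hm]
  have hkill : (aeval M q) *ᵥ Pi.single (⟨0,hn⟩ : Fin n) 1 = 0 := by
    rw [Polynomial.aeval_eq_sum_range, hdeg, sum_mulVec', Finset.sum_range_succ]
    have h1 : ∀ i ∈ Finset.range n, (q.coeff i • M ^ i) *ᵥ Pi.single (⟨0,hn⟩ : Fin n) 1
        = q.coeff i • ((M ^ i) *ᵥ Pi.single (⟨0,hn⟩ : Fin n) 1) := fun i _ =>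
      Matrix.smul_mulVec _ _ _
    rw [Finset.sum_congr rfl h1]
    have h2 : ∑ i ∈ Finset.range n, q.coeff i • ((M ^ i) *ᵥ Pi.single (⟨0,hn⟩ : Fin n) 1)
        = ∑ i : Fin n, q.coeff (i:ℕ) • (Pi.single i 1 : Fin n → F) := by
      rw [← Fin.sum_univ_eq_sum_range]
      refine Finset.sum_congr rfl fun i _ => ?_
      rw [hpow (i:ℕ) i.isLt, Fin.eta]
    rw [h2]
    have h3 : (M ^ n) *ᵥ Pi.single (⟨0,hn⟩ : Fin n) 1 = fun i : Fin n => -q.coeff (i:ℕ) := by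
      have hn' : M ^ n = M * M ^ (n-1) := by
        rw [← pow_succ']
        congr 1
        omega
      rw [hn', ← Matrix.mulVec_mulVec, hpow (n-1) (by omega), hlast]
    rw [Matrix.smul_mulVec, h3]
    have hcn : q.coeff n = 1 := by rw [← hdeg]; exact hq.coeff_natDegree
    rw [hcn, one_smul]
    ext i
    simp [Pi.single_apply]
  have hkillall : ∀ v : Fin n, (aeval M q) *ᵥ Pi.single v 1 = 0 := by
    intro v
    have h1 : (M ^ (v:ℕ)) *ᵥ Pi.single (⟨0,hn⟩:Fin n) 1 = Pi.single v 1 := by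
      have := hpow (v:ℕ) v.isLt
      rwa [Fin.eta] at this
    have hcomm : (aeval M q) * M ^ (v:ℕ) = M ^ (v:ℕ) * (aeval M q) := by
      have h := congrArg (aeval M) (mul_comm q (X ^ (v:ℕ)))
      simpa only [_root_.map_mul, map_pow, Polynomial.aeval_X] using h
    rw [← h1, Matrix.mulVec_mulVec, hcomm, ← Matrix.mulVec_mulVec, hkill,
      Matrix.mulVec_zero]
  ext i j
  have := congrFun (hkillall j) i
  rw [Matrix.mulVec_single_one] at this
  simpa using this

section StarTools
open Matrix
variable {F : Type*} [Field F] (σ : F →+* F) {n : ℕ}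

/-- auxiliary: the σ-conjugate-transpose. -/
def starm (A : Matrix (Fin n) (Fin n) F) : Matrix (Fin n) (Fin n) F := (A.map σ)ᵀ

lemma starm_mul (A B : Matrix (Fin n) (Fin n) F) :
    starm σ (A * B) = starm σ B * starm σ A := by
  unfold starm
  rw [Matrix.map_mul, Matrix.transpose_mul]

lemma starm_one : starm σ (1 : Matrix (Fin n) (Fin n) F) = 1 := by
  unfold starm
  ext i j
  simp [Matrix.one_apply]
  split <;> simp_all [eq_comm]

lemma starm_add (A B : Matrix (Fin n) (Fin n) F) :
    starm σ (A + B) = starm σ A + starm σ B := by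
  unfold starm; ext i j; simp

lemma starm_smul (a : F) (A : Matrix (Fin n) (Fin n) F) :
    starm σ (a • A) = σ a • starm σ A := by
  unfold starm; ext i j; simp [mul_comm]

lemma starm_sum {ι : Type*} (s : Finset ι) (f : ι → Matrix (Fin n) (Fin n) F) :
    starm σ (∑ i ∈ s, f i) = ∑ i ∈ s, starm σ (f i) := by
  unfold starm; ext i j
  simp only [Matrix.transpose_apply, Matrix.map_apply, Matrix.sum_apply, map_sum]

lemma starm_starm (hσ : ∀ a, σ (σ a) = a) (A : Matrix (Fin n) (Fin n) F) :
    starm σ (starm σ A) = A := by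
  unfold starm; ext i j; simp [hσ]

lemma starm_pow (A : Matrix (Fin n) (Fin n) F) (j : ℕ) :
    starm σ (A ^ j) = starm σ A ^ j := by
  induction j with
  | zero => simp [pow_zero, starm_one]
  | succ k ih => rw [pow_succ, starm_mul, ih, pow_succ']

lemma starm_det (A : Matrix (Fin n) (Fin n) F) : (starm σ A).det = σ A.det := by
  unfold starm
  rw [Matrix.det_transpose]
  exact (RingHom.map_det σ A).symm

lemma starm_inv (A : Matrix (Fin n) (Fin n) F) (h : IsUnit A.det) :
    starm σ A⁻¹ = (starm σ A)⁻¹ := by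
  symm
  apply Matrix.inv_eq_right_inv
  rw [← starm_mul, Matrix.nonsing_inv_mul _ h, starm_one]

end StarTools

/-- Let `F_{pᵗ}` be an `n × n` Frobenius block whose irreducible
`p` satisfies condition (*), let `C` be a *cosquare root of `F_{pᵗ}` (so `C` is
nonsingular and `F_{pᵗ} = (C*)⁻¹ C` with `M* = (M.map σ)ᵀ`), and let `φ` be a
nonzero function of form (♦).  Then `C ⬝ φ(F_{pᵗ})` is itself a *cosquare root
of `F_{pᵗ}`, and in particular it is a Toeplitz matrix. -/
theorem cosquare_root_mul_phi {F : Type*} [Field F] (hchar : (2 : F) ≠ 0)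
    (σ : F →+* F) (hσ : ∀ a : F, σ (σ a) = a)
    (p : Polynomial F) (hp : Irreducible p) (hmonic : p.Monic) (t : ℕ) (ht : 0 < t)
    (n : ℕ) (hn : n = (p ^ t).natDegree)
    (hstar : p ≠ X ∧ p = polyVee σ p ∧
      (σ = RingHom.id F → p ≠ X + C ((-1 : F) ^ (n + 1))))
    (Cm : Matrix (Fin n) (Fin n) F) (hC : IsUnit Cm.det)
    (hCroot : companionMatrix n (p ^ t) = ((Cm.map σ)ᵀ)⁻¹ * Cm)
    (r : ℕ) (hr : r = p.natDegree / 2) (b : ℕ → F)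
    (hb : formDiamond σ p r b) (hbne : ∃ j ≤ r, b j ≠ 0) :
    IsUnit (Cm * phiMat σ r b (companionMatrix n (p ^ t))).det ∧
    companionMatrix n (p ^ t) =
      (((Cm * phiMat σ r b (companionMatrix n (p ^ t))).map σ)ᵀ)⁻¹ *
        (Cm * phiMat σ r b (companionMatrix n (p ^ t))) ∧
    ∃ α : ℤ → F, ∀ i j : Fin n,
      (Cm * phiMat σ r b (companionMatrix n (p ^ t))) i j = α ((i : ℤ) - (j : ℤ)) := by
  
  classical
  have hσinj : Function.Injective σ := Function.LeftInverse.injective hσ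
  have hσne : ∀ x : F, x ≠ 0 → σ x ≠ 0 := fun x hx h0 => hx (by
    have := congrArg σ h0; rwa [hσ, map_zero] at this)
  set M := companionMatrix n (p ^ t) with hMdef
  have hk : 0 < p.natDegree := hp.natDegree_pos
  have hn0 : 0 < n := by
    rw [hn, Polynomial.natDegree_pow]; exact Nat.mul_pos ht hk
  have hmonic' : (p ^ t).Monic := hmonic.pow t
  have haeval : Polynomial.aeval M (p ^ t) = 0 :=
    companion_aeval (p ^ t) hmonic' hn.symm hn0
  have hCs : IsUnit (starm σ Cm).det := by
    rw [starm_det]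
    rw [isUnit_iff_ne_zero] at hC ⊢
    exact hσne _ hC
  have hMC : M = (starm σ Cm)⁻¹ * Cm := hCroot
  have hMdet : IsUnit M.det := by
    rw [hMC, Matrix.det_mul, Matrix.det_nonsing_inv, Ring.inverse_eq_inv,
      isUnit_iff_ne_zero]
    rw [isUnit_iff_ne_zero] at hC hCs
    exact mul_ne_zero (inv_ne_zero hCs) hC
  have hMM : M⁻¹ * M = 1 := Matrix.nonsing_inv_mul M hMdet
  have hMM' : M * M⁻¹ = 1 := Matrix.mul_nonsing_inv M hMdet
  have hCC : Cm⁻¹ * Cm = 1 := Matrix.nonsing_inv_mul Cm hC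
  have hCC' : Cm * Cm⁻¹ = 1 := Matrix.mul_nonsing_inv Cm hC
  have hCMC : starm σ Cm * M = Cm := by
    rw [hMC, ← mul_assoc, Matrix.mul_nonsing_inv _ hCs, one_mul]
  have hMinv_eq : M⁻¹ = Cm⁻¹ * starm σ Cm := by
    rw [hMC, Matrix.mul_inv_rev, Matrix.nonsing_inv_nonsing_inv _ hCs]
  have hstarM : starm σ M = Cm * M⁻¹ * Cm⁻¹ := by
    have h1 : starm σ M = starm σ Cm * Cm⁻¹ := by
      conv_lhs => rw [hMC]
      rw [starm_mul, starm_inv σ _ hCs, starm_starm σ hσ]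
    rw [h1, hMinv_eq, ← mul_assoc, hCC', one_mul]
  have hstarMinv : starm σ M⁻¹ = Cm * M * Cm⁻¹ := by
    rw [starm_inv σ _ hMdet, hstarM, Matrix.mul_inv_rev, Matrix.mul_inv_rev,
      Matrix.nonsing_inv_nonsing_inv _ hC, Matrix.nonsing_inv_nonsing_inv _ hMdet]
    rw [mul_assoc]
  have hconjpow : ∀ (A : Matrix (Fin n) (Fin n) F) (j : ℕ),
      (Cm * A * Cm⁻¹) ^ j = Cm * A ^ j * Cm⁻¹ := by
    intro A j
    induction j with
    | zero => rw [pow_zero, pow_zero, mul_one, hCC']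
    | succ k ih =>
      rw [pow_succ, pow_succ, ih, mul_assoc, mul_assoc, ← mul_assoc Cm⁻¹,
        ← mul_assoc Cm⁻¹, hCC, one_mul, ← mul_assoc, ← mul_assoc, mul_assoc Cm (A ^ k) A]
  set Φ := phiMat σ r b M with hΦdef
  have hstarΦ : starm σ Φ = Cm * Φ * Cm⁻¹ := by
    have e1 : starm σ Φ = b 0 • (1 : Matrix (Fin n) (Fin n) F)
        + ∑ j ∈ Finset.Icc 1 r, (b j • (Cm * M ^ j * Cm⁻¹) + σ (b j) • (Cm * M⁻¹ ^ j * Cm⁻¹)) := by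
      rw [hΦdef]
      unfold phiMat
      rw [starm_add, starm_smul, starm_one, starm_sum, ← hb.1]
      congr 1
      refine Finset.sum_congr rfl fun j _ => ?_
      rw [starm_add, starm_smul, starm_smul, starm_pow, starm_pow, hσ,
        hstarM, hstarMinv, hconjpow, hconjpow, add_comm]
    have e2 : Cm * Φ * Cm⁻¹ = b 0 • (Cm * 1 * Cm⁻¹)
        + ∑ j ∈ Finset.Icc 1 r, (b j • (Cm * M ^ j * Cm⁻¹) + σ (b j) • (Cm * M⁻¹ ^ j * Cm⁻¹)) := by
      conv_lhs => rw [hΦdef]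
      unfold phiMat
      rw [mul_add, add_mul, Finset.mul_sum, Finset.sum_mul]
      congr 1
      · rw [mul_smul_comm, smul_mul_assoc]
      · refine Finset.sum_congr rfl fun j _ => ?_
        rw [mul_add, add_mul, mul_smul_comm, smul_mul_assoc,
          mul_smul_comm, smul_mul_assoc]
    rw [e1, e2, mul_one, hCC']
  have hΦdet : IsUnit Φ.det := by
    set g : Polynomial F := (∑ j ∈ Finset.range (r+1), Polynomial.C (b j) * X ^ (r+j)) +
        ∑ j ∈ Finset.Icc 1 r, Polynomial.C (σ (b j)) * X ^ (r-j) with hg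
    have hgcoeff_hi : ∀ j, j ≤ r → g.coeff (r+j) = b j := by
      intro j hj
      rw [hg, Polynomial.coeff_add, Polynomial.finset_sum_coeff, Polynomial.finset_sum_coeff]
      have h1 : ∑ i ∈ Finset.range (r+1), (Polynomial.C (b i) * X ^ (r+i)).coeff (r+j) = b j := by
        rw [Finset.sum_eq_single j]
        · simp [Polynomial.coeff_C_mul, Polynomial.coeff_X_pow]
        · intro i _ hne
          rw [Polynomial.coeff_C_mul, Polynomial.coeff_X_pow, if_neg (by omega), mul_zero]
        · intro hj'
          exact absurd (Finset.mem_range.mpr (by omega)) hj'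
      have h2 : ∑ i ∈ Finset.Icc 1 r, (Polynomial.C (σ (b i)) * X ^ (r-i)).coeff (r+j) = 0 := by
        refine Finset.sum_eq_zero fun i hi => ?_
        rw [Finset.mem_Icc] at hi
        rw [Polynomial.coeff_C_mul, Polynomial.coeff_X_pow, if_neg (by omega), mul_zero]
      rw [h1, h2, add_zero]
    have hgc0 : 1 ≤ r → g.coeff 0 = σ (b r) := by
      intro hr1
      rw [hg, Polynomial.coeff_add, Polynomial.finset_sum_coeff, Polynomial.finset_sum_coeff]
      have h1 : ∑ i ∈ Finset.range (r+1), (Polynomial.C (b i) * X ^ (r+i)).coeff 0 = 0 := by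
        refine Finset.sum_eq_zero fun i _ => ?_
        rw [Polynomial.coeff_C_mul, Polynomial.coeff_X_pow, if_neg (by omega), mul_zero]
      have h2 : ∑ i ∈ Finset.Icc 1 r, (Polynomial.C (σ (b i)) * X ^ (r-i)).coeff 0 = σ (b r) := by
        rw [Finset.sum_eq_single r]
        · rw [Polynomial.coeff_C_mul, Polynomial.coeff_X_pow, if_pos (by omega), mul_one]
        · intro i hi hne
          rw [Finset.mem_Icc] at hi
          rw [Polynomial.coeff_C_mul, Polynomial.coeff_X_pow, if_neg (by omega), mul_zero]
        · intro hr'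
          exact absurd (Finset.mem_Icc.mpr ⟨hr1, le_rfl⟩) hr'
      rw [h1, h2, zero_add]
    have hgdeg : g.natDegree ≤ 2*r := by
      rw [hg]
      refine (Polynomial.natDegree_add_le _ _).trans (max_le ?_ ?_)
      · refine Polynomial.natDegree_sum_le_of_forall_le _ _ fun i hi => ?_
        refine (Polynomial.natDegree_C_mul_le _ _).trans ?_
        rw [Polynomial.natDegree_X_pow]
        rw [Finset.mem_range] at hi; omega
      · refine Polynomial.natDegree_sum_le_of_forall_le _ _ fun i hi => ?_
        refine (Polynomial.natDegree_C_mul_le _ _).trans ?_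
        rw [Polynomial.natDegree_X_pow]; omega
    have hpndvd : ¬ p ∣ g := by
      intro hdvd
      obtain ⟨j, hjr, hbj⟩ := hbne
      have hgne : g ≠ 0 := fun h0 => hbj (by rw [← hgcoeff_hi j hjr, h0, Polynomial.coeff_zero])
      have hpne : p ≠ 0 := hp.ne_zero
      have hdegp : p.natDegree ≤ g.natDegree := Polynomial.natDegree_le_of_dvd hdvd hgne
      have hk2r : p.natDegree = 2*r := by omega
      obtain ⟨h, hh⟩ := hdvd
      have hhne : h ≠ 0 := fun h0 => hgne (by rw [hh, h0, mul_zero])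
      have hhdeg : h.natDegree = 0 := by
        have h3 := Polynomial.natDegree_mul hpne hhne
        rw [← hh] at h3
        omega
      have hhC : h = Polynomial.C (h.coeff 0) := Polynomial.eq_C_of_natDegree_eq_zero hhdeg
      set c := h.coeff 0 with hc
      have hgc : ∀ m, g.coeff m = p.coeff m * c := by
        intro m; rw [hh, hhC, Polynomial.coeff_mul_C]
      have hr1 : 1 ≤ r := by omega
      have hbrc : b r = c := by
        have h1 := hgc (r+r)
        rw [hgcoeff_hi r le_rfl] at h1
        have h2 : p.coeff (r+r) = 1 := by
          have h4 := hmonic.coeff_natDegree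
          rwa [hk2r, two_mul] at h4
        rw [h2, one_mul] at h1; exact h1
      have hsbr : σ (b r) = p.coeff 0 * c := by rw [← hgc 0, hgc0 hr1]
      have hcne : c ≠ 0 := fun h0 => hhne (by rw [hhC, h0]; exact map_zero Polynomial.C)
      have hbrne : b r ≠ 0 := by rw [hbrc]; exact hcne
      have hEv := hb.2 ⟨r, by omega⟩
      by_cases hid : σ = RingHom.id F
      · exact hbrne (hEv.1 hid)
      · have hp0coeff : p.coeff 0 = p.eval 0 := Polynomial.coeff_zero_eq_eval_zero p
        by_cases hp0 : p.eval 0 = 1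
        · have h1 : b r = - σ (b r) := hEv.2.2 hid hp0
          rw [hsbr, hp0coeff, hp0, one_mul, ← hbrc] at h1
          have h2 : (2:F) * b r = 0 := by linear_combination h1
          exact hbrne ((mul_eq_zero.mp h2).resolve_left hchar)
        · have h1 : b r = σ (b r) := hEv.2.1 hid hp0
          rw [hsbr, hp0coeff, ← hbrc] at h1
          apply hp0
          have h2 : p.eval 0 * b r = 1 * b r := by rw [one_mul, ← h1]
          exact (mul_right_cancel₀ hbrne h2)
    have hinvpow : ∀ j : ℕ, (M⁻¹) ^ j * M ^ j = 1 := by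
      intro j
      induction j with
      | zero => simp
      | succ k ih =>
        rw [pow_succ, pow_succ', mul_assoc, ← mul_assoc M⁻¹ M (M ^ k), hMM, one_mul, ih]
    have hMrj : ∀ j, j ≤ r → (M⁻¹) ^ j * M ^ r = M ^ (r-j) := by
      intro j hj
      have h1 : M ^ r = M ^ j * M ^ (r-j) := by
        rw [← pow_add]; congr 1; omega
      rw [h1, ← mul_assoc, hinvpow, one_mul]
    have hrhs : Polynomial.aeval M g =
        (∑ j ∈ Finset.range (r+1), b j • M ^ (r+j)) +
        ∑ j ∈ Finset.Icc 1 r, σ (b j) • M ^ (r-j) := by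
      rw [hg, map_add, map_sum, map_sum]
      congr 1 <;> refine Finset.sum_congr rfl fun j _ => ?_ <;>
        rw [_root_.map_mul, Polynomial.aeval_C, map_pow, Polynomial.aeval_X,
          ← Algebra.smul_def]
    have hsplit : Finset.range (r+1) = insert 0 (Finset.Icc 1 r) := by
      ext x; simp only [Finset.mem_range, Finset.mem_Icc, Finset.mem_insert]; omega
    have hΦMr : Φ * M ^ r = Polynomial.aeval M g := by
      calc Φ * M ^ r
          = b 0 • M ^ r + ∑ j ∈ Finset.Icc 1 r, (b j • M ^ (r+j) + σ (b j) • M ^ (r-j)) := by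
            rw [hΦdef]
            unfold phiMat
            rw [add_mul, smul_mul_assoc, one_mul, Finset.sum_mul]
            congr 1
            refine Finset.sum_congr rfl fun j hj => ?_
            rw [Finset.mem_Icc] at hj
            rw [add_mul, smul_mul_assoc, smul_mul_assoc, ← pow_add, Nat.add_comm j r,
              hMrj j hj.2]
        _ = Polynomial.aeval M g := by
            rw [hrhs, hsplit, Finset.sum_insert (by simp), Nat.add_zero, add_assoc,
              ← Finset.sum_add_distrib]
    have hcop : IsCoprime (p ^ t) g :=
      ((hp.coprime_iff_not_dvd).mpr hpndvd).pow_left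
    obtain ⟨u, v, huv⟩ := hcop
    have h1 : Polynomial.aeval M v * Polynomial.aeval M g = 1 := by
      have h := congrArg (Polynomial.aeval M) huv
      rw [map_add, _root_.map_mul, _root_.map_mul, haeval, mul_zero, zero_add, _root_.map_one] at h
      exact h
    have h2 : Polynomial.aeval M g * Polynomial.aeval M v = 1 := by
      rw [← _root_.map_mul, mul_comm, _root_.map_mul]
      exact h1
    have hgM : IsUnit (Polynomial.aeval M g) := ⟨⟨_, _, h2, h1⟩, rfl⟩
    have h3 : IsUnit (Φ * M ^ r).det := by
      rw [hΦMr]; exact (Matrix.isUnit_iff_isUnit_det _).mp hgM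
    rw [Matrix.det_mul] at h3
    exact isUnit_of_mul_isUnit_left h3
  set D := Cm * Φ with hDdef
  have hDdet : IsUnit D.det := by
    rw [hDdef, Matrix.det_mul]; exact hC.mul hΦdet
  have hstarD : starm σ D = Cm * Φ * Cm⁻¹ * starm σ Cm := by
    rw [hDdef, starm_mul, hstarΦ]
  have hDstarM : starm σ D * M = D := by
    rw [hstarD, mul_assoc, hCMC, hDdef, mul_assoc, mul_assoc, hCC, mul_one]
  have hDsdet : IsUnit (starm σ D).det := by
    rw [starm_det, isUnit_iff_ne_zero]
    rw [isUnit_iff_ne_zero] at hDdet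
    exact hσne _ hDdet
  refine ⟨hDdet, ?_, ?_⟩
  · show M = (starm σ D)⁻¹ * D
    have h2 : (starm σ D)⁻¹ * (starm σ D * M) = M := by
      rw [← mul_assoc, Matrix.nonsing_inv_mul _ hDsdet, one_mul]
    rw [hDstarM] at h2
    exact h2.symm
  · -- Toeplitz part
    have hstarDM : starm σ M * D = starm σ D := by
      have h := congrArg (starm σ) hDstarM
      rw [starm_mul, starm_starm σ hσ] at h
      exact h
    have hDMM : D = starm σ M * D * M := by
      calc D = starm σ D * M := hDstarM.symm
        _ = starm σ M * D * M := by rw [← hstarDM]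
    have hshift : ∀ (i j : Fin n) (hi : (i:ℕ)+1 < n) (hj : (j:ℕ)+1 < n),
        D i j = D ⟨(i:ℕ)+1, hi⟩ ⟨(j:ℕ)+1, hj⟩ := by
      intro i j hi hj
      have hMcol : ∀ l : Fin n, M l j = if (l:ℕ) = (j:ℕ)+1 then 1 else 0 := by
        intro l
        show companionMatrix n (p ^ t) l j = _
        simp only [companionMatrix, Matrix.of_apply]
        rw [if_neg (by omega)]
      have hMrow : ∀ k : Fin n, starm σ M i k = if (k:ℕ) = (i:ℕ)+1 then 1 else 0 := by
        intro k
        show σ (companionMatrix n (p ^ t) k i) = _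
        simp only [companionMatrix, Matrix.of_apply]
        rw [if_neg (by omega)]
        split <;> simp
      conv_lhs => rw [hDMM]
      rw [Matrix.mul_apply]
      rw [Finset.sum_eq_single (⟨(j:ℕ)+1, hj⟩ : Fin n)]
      · rw [hMcol, if_pos rfl, mul_one, Matrix.mul_apply,
          Finset.sum_eq_single (⟨(i:ℕ)+1, hi⟩ : Fin n)]
        · rw [hMrow, if_pos rfl, one_mul]
        · intro k _ hk
          rw [hMrow, if_neg (fun hc => hk (Fin.ext hc)), zero_mul]
        · intro hmem; exact absurd (Finset.mem_univ _) hmem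
      · intro l _ hl
        rw [hMcol, if_neg (fun hc => hl (Fin.ext hc)), mul_zero]
      · intro hmem; exact absurd (Finset.mem_univ _) hmem
    have hdesc : ∀ s : ℕ, ∀ i j : Fin n, min (i:ℕ) (j:ℕ) = s →
        D i j = D ⟨(i:ℕ) - s, Nat.lt_of_le_of_lt (Nat.sub_le _ _) i.isLt⟩
                 ⟨(j:ℕ) - s, Nat.lt_of_le_of_lt (Nat.sub_le _ _) j.isLt⟩ := by
      intro s
      induction s with
      | zero =>
        intro i j _
        have e1 : (⟨(i:ℕ) - 0, Nat.lt_of_le_of_lt (Nat.sub_le _ _) i.isLt⟩ : Fin n) = i :=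
          Fin.ext (show (i:ℕ) - 0 = (i:ℕ) by omega)
        have e2 : (⟨(j:ℕ) - 0, Nat.lt_of_le_of_lt (Nat.sub_le _ _) j.isLt⟩ : Fin n) = j :=
          Fin.ext (show (j:ℕ) - 0 = (j:ℕ) by omega)
        rw [e1, e2]
      | succ s ih =>
        intro i j hmin
        have hi0 := i.isLt
        have hj0 := j.isLt
        have hi1 : 1 ≤ (i:ℕ) := by omega
        have hj1 : 1 ≤ (j:ℕ) := by omega
        have hilt : (i:ℕ) - 1 < n := by omega
        have hjlt : (j:ℕ) - 1 < n := by omega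
        have h1 := hshift ⟨(i:ℕ) - 1, hilt⟩ ⟨(j:ℕ) - 1, hjlt⟩
          (show (i:ℕ) - 1 + 1 < n by omega) (show (j:ℕ) - 1 + 1 < n by omega)
        have e1 : (⟨(i:ℕ) - 1 + 1, show (i:ℕ) - 1 + 1 < n by omega⟩ : Fin n) = i :=
          Fin.ext (show (i:ℕ) - 1 + 1 = (i:ℕ) by omega)
        have e2 : (⟨(j:ℕ) - 1 + 1, show (j:ℕ) - 1 + 1 < n by omega⟩ : Fin n) = j :=
          Fin.ext (show (j:ℕ) - 1 + 1 = (j:ℕ) by omega)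
        rw [e1, e2] at h1
        have h2 := ih ⟨(i:ℕ) - 1, hilt⟩ ⟨(j:ℕ) - 1, hjlt⟩
          (show min ((i:ℕ) - 1) ((j:ℕ) - 1) = s by omega)
        rw [h1] at h2
        rw [h2]
        exact congrArg₂ (fun a b => D a b)
          (Fin.ext (show (i:ℕ) - 1 - s = (i:ℕ) - (s+1) by omega))
          (Fin.ext (show (j:ℕ) - 1 - s = (j:ℕ) - (s+1) by omega))
    refine ⟨fun d => if h : 0 ≤ d ∧ d.toNat < n then D ⟨d.toNat, h.2⟩ ⟨0, hn0⟩
        else if h' : (-d).toNat < n then D ⟨0, hn0⟩ ⟨(-d).toNat, h'⟩ else 0, ?_⟩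
    intro i j
    dsimp only
    have hi0 := i.isLt
    have hj0 := j.isLt
    rcases le_or_gt (j:ℕ) (i:ℕ) with hle | hlt
    · have h1 := hdesc (j:ℕ) i j (by omega)
      have hcond : 0 ≤ (i:ℤ) - (j:ℤ) ∧ ((i:ℤ) - (j:ℤ)).toNat < n := ⟨by omega, by omega⟩
      rw [dif_pos hcond, h1]
      have e1 : (⟨(i:ℕ) - (j:ℕ), Nat.lt_of_le_of_lt (Nat.sub_le _ _) i.isLt⟩ : Fin n)
          = (⟨((i:ℤ) - (j:ℤ)).toNat, hcond.2⟩ : Fin n) :=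
        Fin.ext (show (i:ℕ) - (j:ℕ) = ((i:ℤ) - (j:ℤ)).toNat by omega)
      have e2 : (⟨(j:ℕ) - (j:ℕ), Nat.lt_of_le_of_lt (Nat.sub_le _ _) j.isLt⟩ : Fin n)
          = (⟨0, hn0⟩ : Fin n) :=
        Fin.ext (show (j:ℕ) - (j:ℕ) = 0 by omega)
      rw [e1, e2]
    · have h1 := hdesc (i:ℕ) i j (by omega)
      have hcond : ¬ (0 ≤ (i:ℤ) - (j:ℤ) ∧ ((i:ℤ) - (j:ℤ)).toNat < n) := by
        intro hc; omega
      have hcond2 : (-((i:ℤ) - (j:ℤ))).toNat < n := by omega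
      rw [dif_neg hcond, dif_pos hcond2, h1]
      have e1 : (⟨(i:ℕ) - (i:ℕ), Nat.lt_of_le_of_lt (Nat.sub_le _ _) i.isLt⟩ : Fin n)
          = (⟨0, hn0⟩ : Fin n) :=
        Fin.ext (show (i:ℕ) - (i:ℕ) = 0 by omega)
      have e2 : (⟨(j:ℕ) - (i:ℕ), Nat.lt_of_le_of_lt (Nat.sub_le _ _) j.isLt⟩ : Fin n)
          = (⟨(-((i:ℤ) - (j:ℤ))).toNat, hcond2⟩ : Fin n) :=
        Fin.ext (show (j:ℕ) - (i:ℕ) = (-((i:ℤ) - (j:ℤ))).toNat by omega)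
      rw [e1, e2]
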